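/- arXiv:1103.4497 — 3 statements merged into one kernel-verified Lean document; each statement's English description precedes it below -/
import Mathlib

section
/- Let p, q ≥ 0 and let h be the standard symmetric bilinear form of signature (p+1,q+1) on ℝ^{p+q+2}. Let v be a nonzero vector with h(v,v) = 0. If w₁, w₂ are vectors with h(w₁,w₁) = h(w₂,w₂) = 0 and h(v,w₁) = h(v,w₂), and neither w₁ nor w₂ is a scalar multiple of v, then there exists an isometry g of h with g v = v and g w₁ = w₂. -/
/-- The standard symmetric bilinear form of signature `(p,q)` on `ℝ^{p+q}`:
`h(v,w) = Σ_{i<p} vᵢwᵢ − Σ_{i≥p} vᵢwᵢ`. -/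
def stdForm (p q : ℕ) (v w : Fin (p + q) → ℝ) : ℝ :=
  ∑ i : Fin (p + q), (if (i : ℕ) < p then (1 : ℝ) else -1) * v i * w i

namespace StdAux
variable {p q : ℕ}

lemma comm (x y : Fin (p+q) → ℝ) : stdForm p q x y = stdForm p q y x := by
  unfold stdForm; exact Finset.sum_congr rfl fun i _ => by ring

lemma add_left (x y z : Fin (p+q) → ℝ) :
    stdForm p q (x + y) z = stdForm p q x z + stdForm p q y z := by
  unfold stdForm; rw [← Finset.sum_add_distrib]
  exact Finset.sum_congr rfl fun i _ => by split <;> simp [Pi.add_apply] <;> ring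

lemma smul_left (c : ℝ) (x z : Fin (p+q) → ℝ) :
    stdForm p q (c • x) z = c * stdForm p q x z := by
  unfold stdForm; rw [Finset.mul_sum]
  exact Finset.sum_congr rfl fun i _ => by split <;> simp [Pi.smul_apply] <;> ring

lemma add_right (x y z : Fin (p+q) → ℝ) :
    stdForm p q x (y + z) = stdForm p q x y + stdForm p q x z := by
  rw [comm, add_left, comm x y, comm x z]

lemma smul_right (c : ℝ) (x z : Fin (p+q) → ℝ) :
    stdForm p q x (c • z) = c * stdForm p q x z := by
  rw [comm, smul_left, comm]

lemma sub_left (x y z : Fin (p+q) → ℝ) :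
    stdForm p q (x - y) z = stdForm p q x z - stdForm p q y z := by
  have h₁ := add_left x (-y) z
  have h : stdForm p q (-y) z = -stdForm p q y z := by
    have := smul_left (-1 : ℝ) y z
    simpa using this
  simpa [sub_eq_add_neg, h] using h₁

lemma sub_right (x y z : Fin (p+q) → ℝ) :
    stdForm p q x (y - z) = stdForm p q x y - stdForm p q x z := by
  rw [comm, sub_left, comm y x, comm z x]

/-! ### duality via the sign-flip map -/

def starV (p q : ℕ) (x : Fin (p+q) → ℝ) : Fin (p+q) → ℝ :=
  fun i => (if (i : ℕ) < p then (1 : ℝ) else -1) * x i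

def dotV (x y : Fin (p+q) → ℝ) : ℝ := ∑ i : Fin (p+q), x i * y i

lemma star_star (x : Fin (p+q) → ℝ) : starV p q (starV p q x) = x := by
  funext i; by_cases h : (i : ℕ) < p <;> simp [starV, h]

lemma star_smul (c : ℝ) (x : Fin (p+q) → ℝ) :
    starV p q (c • x) = c • starV p q x := by
  funext i; by_cases h : (i : ℕ) < p <;> simp [starV, h] <;> ring

lemma stdForm_star (x y : Fin (p+q) → ℝ) :
    stdForm p q (starV p q x) y = dotV x y := by
  unfold stdForm dotV starV
  refine Finset.sum_congr rfl fun i _ => ?_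
  by_cases h : (i : ℕ) < p <;> simp [h]

lemma dot_comm (x y : Fin (p+q) → ℝ) : dotV x y = dotV y x :=
  Finset.sum_congr rfl fun i _ => by ring

lemma dot_expand (a b : ℝ) (x y z : Fin (p+q) → ℝ) :
    dotV (a • x + b • y) z = a * dotV x z + b * dotV y z := by
  unfold dotV
  rw [Finset.mul_sum, Finset.mul_sum, ← Finset.sum_add_distrib]
  exact Finset.sum_congr rfl fun i _ => by simp [Pi.add_apply, Pi.smul_apply]; ring

lemma dot_self_eq_zero {x : Fin (p+q) → ℝ} (h : dotV x x = 0) : x = 0 := by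
  funext i
  have h' : ∀ j ∈ Finset.univ, (0:ℝ) ≤ x j * x j := fun j _ => mul_self_nonneg _
  have := (Finset.sum_eq_zero_iff_of_nonneg h').1 h i (Finset.mem_univ i)
  simpa [mul_self_eq_zero] using this

lemma exists_partner (v w : Fin (p+q) → ℝ) (hv : v ≠ 0)
    (hw : ¬ ∃ c : ℝ, w = c • v) :
    ∃ y, stdForm p q w y = 1 ∧ stdForm p q v y = 0 := by
  set sv := starV p q v with hsv
  set sw := starV p q w with hsw
  set A := dotV sv sv with hA
  set C := dotV sw sv with hC
  set y₀ : Fin (p+q) → ℝ := A • sw + (-C) • sv with hy₀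
  have hvy₀ : dotV sv y₀ = 0 := by
    have h := dot_expand A (-C) sw sv sv
    rw [← hy₀] at h
    rw [dot_comm sv y₀, h, ← hC, ← hA]
    ring
  have hA0 : A ≠ 0 := by
    intro h
    apply hv
    have : sv = 0 := dot_self_eq_zero (by rw [← hA, h])
    have := congrArg (starV p q) this
    rw [star_star] at this
    simp only [this]
    funext i; simp [starV]
  set c := dotV sw y₀ with hc
  have hc0 : c ≠ 0 := by
    intro h
    have hy00 : dotV y₀ y₀ = 0 := by
      rw [hy₀, dot_expand, ← hy₀, ← hc, h, hvy₀]; ring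
    have hy0 : y₀ = 0 := dot_self_eq_zero hy00
    apply hw
    refine ⟨C / A, ?_⟩
    have h1 : A • sw = C • sv := by
      have := hy0
      rw [hy₀] at this
      have := congrArg (fun z => z + C • sv) this
      simpa [add_assoc, neg_smul, sub_eq_add_neg] using this
    have h2 : sw = (C / A) • sv := by
      have := congrArg (fun z => A⁻¹ • z) h1
      simpa [smul_smul, inv_mul_cancel₀ hA0, div_eq_inv_mul, mul_comm] using this
    have := congrArg (starV p q) h2
    rw [star_star, star_smul, star_star] at this
    exact this
  refine ⟨c⁻¹ • y₀, ?_, ?_⟩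
  · have : stdForm p q w (c⁻¹ • y₀) = c⁻¹ * dotV sw y₀ := by
      conv_lhs => rw [show w = starV p q sw from (star_star w).symm]
      rw [stdForm_star]
      rw [show dotV sw (c⁻¹ • y₀) = dotV (c⁻¹ • y₀) sw from dot_comm _ _]
      rw [show (c⁻¹ • y₀ : Fin (p+q) → ℝ) = c⁻¹ • y₀ + (0:ℝ) • y₀ by simp]
      rw [dot_expand]
      rw [dot_comm y₀ sw]; ring
    rw [this, ← hc, inv_mul_cancel₀ hc0]
  · have : stdForm p q v (c⁻¹ • y₀) = c⁻¹ * dotV sv y₀ := by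
      conv_lhs => rw [show v = starV p q sv from (star_star v).symm]
      rw [stdForm_star]
      rw [show dotV sv (c⁻¹ • y₀) = dotV (c⁻¹ • y₀) sv from dot_comm _ _]
      rw [show (c⁻¹ • y₀ : Fin (p+q) → ℝ) = c⁻¹ • y₀ + (0:ℝ) • y₀ by simp]
      rw [dot_expand]
      rw [dot_comm y₀ sv]; ring
    rw [this, hvy₀]; ring

lemma exists_null_partner (v w : Fin (p+q) → ℝ) (hv : v ≠ 0)
    (hww : stdForm p q w w = 0) (hvw : stdForm p q v w = 0)
    (hw : ¬ ∃ c : ℝ, w = c • v) :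
    ∃ y, stdForm p q w y = 1 ∧ stdForm p q v y = 0 ∧ stdForm p q y y = 0 := by
  obtain ⟨y₀, hwy₀, hvy₀⟩ := exists_partner v w hv hw
  set cc : ℝ := -(stdForm p q y₀ y₀ / 2) with hcc
  refine ⟨y₀ + cc • w, ?_, ?_, ?_⟩
  · rw [add_right, smul_right, hwy₀, hww]; ring
  · rw [add_right, smul_right, hvy₀, hvw]; ring
  · have hyw : stdForm p q y₀ w = 1 := by rw [comm]; exact hwy₀
    simp only [add_left, add_right, smul_left, smul_right]
    rw [hww, hwy₀, hyw, hcc]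
    ring

/-! ### reflections -/

def formL (p q : ℕ) (d : Fin (p+q) → ℝ) : (Fin (p+q) → ℝ) →ₗ[ℝ] ℝ where
  toFun x := stdForm p q x d
  map_add' x y := add_left x y d
  map_smul' c x := by simp [smul_left]

noncomputable def reflL (p q : ℕ) (d : Fin (p+q) → ℝ) :
    (Fin (p+q) → ℝ) →ₗ[ℝ] (Fin (p+q) → ℝ) :=
  LinearMap.id - LinearMap.smulRight ((2 * (stdForm p q d d)⁻¹) • formL p q d) d

lemma reflL_apply (d x : Fin (p+q) → ℝ) :
    reflL p q d x = x - ((2 * (stdForm p q d d)⁻¹) * stdForm p q x d) • d := rfl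

lemma form_reflL (d x : Fin (p+q) → ℝ) (z : Fin (p+q) → ℝ) :
    stdForm p q (reflL p q d x) z
      = stdForm p q x z - (2 * (stdForm p q d d)⁻¹ * stdForm p q x d) * stdForm p q d z := by
  rw [reflL_apply, sub_left, smul_left]

lemma reflL_invol (d : Fin (p+q) → ℝ) (hd : stdForm p q d d ≠ 0) :
    Function.Involutive (reflL p q d) := by
  intro x
  rw [reflL_apply, reflL_apply, sub_left, smul_left]
  have key : (2 * (stdForm p q d d)⁻¹ *
      (stdForm p q x d - 2 * (stdForm p q d d)⁻¹ * stdForm p q x d * stdForm p q d d))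
      = -(2 * (stdForm p q d d)⁻¹ * stdForm p q x d) := by
    field_simp
    ring
  rw [key, neg_smul, sub_neg_eq_add, sub_add_cancel]

noncomputable def reflE (p q : ℕ) (d : Fin (p+q) → ℝ) (hd : stdForm p q d d ≠ 0) :
    (Fin (p+q) → ℝ) ≃ₗ[ℝ] (Fin (p+q) → ℝ) :=
  LinearEquiv.ofInvolutive (reflL p q d) (reflL_invol d hd)

lemma reflE_isom (d : Fin (p+q) → ℝ) (hd : stdForm p q d d ≠ 0) (x y : Fin (p+q) → ℝ) :
    stdForm p q (reflE p q d hd x) (reflE p q d hd y) = stdForm p q x y := by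
  show stdForm p q (reflL p q d x) (reflL p q d y) = stdForm p q x y
  rw [form_reflL d x, reflL_apply, sub_right, smul_right, sub_right, smul_right]
  rw [comm d y]
  field_simp
  ring

lemma exists_reflect (a b : Fin (p+q) → ℝ) (ha : stdForm p q a a = 0)
    (hb : stdForm p q b b = 0) (hab : stdForm p q a b ≠ 0) :
    ∃ g : (Fin (p+q) → ℝ) ≃ₗ[ℝ] (Fin (p+q) → ℝ),
      (∀ x y, stdForm p q (g x) (g y) = stdForm p q x y) ∧ g a = b ∧
      (∀ x, stdForm p q x a = 0 → stdForm p q x b = 0 → g x = x) := by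
  have hdd : stdForm p q (a - b) (a - b) ≠ 0 := by
    rw [sub_left, sub_right, sub_right, ha, hb, comm b a]
    intro h
    apply hab
    linarith [h]
  refine ⟨reflE p q (a - b) hdd, reflE_isom (a - b) hdd, ?_, ?_⟩
  · show reflL p q (a - b) a = b
    rw [reflL_apply]
    have h1 : stdForm p q a (a - b) = - stdForm p q a b := by
      rw [sub_right, ha]; ring
    have h2 : stdForm p q (a - b) (a - b) = - (2 * stdForm p q a b) := by
      rw [sub_left, sub_right, sub_right, ha, hb, comm b a]; ring
    rw [h1, h2]
    have : (2 * (-(2 * stdForm p q a b))⁻¹ * -stdForm p q a b) = 1 := by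
      field_simp
    rw [this, one_smul, sub_sub_cancel]
  · intro x hxa hxb
    show reflL p q (a - b) x = x
    rw [reflL_apply]
    have : stdForm p q x (a - b) = 0 := by rw [sub_right, hxa, hxb, sub_zero]
    rw [this]
    simp

/-! ### Eichler transvections -/

noncomputable def eichL (p q : ℕ) (v u : Fin (p+q) → ℝ) :
    (Fin (p+q) → ℝ) →ₗ[ℝ] (Fin (p+q) → ℝ) :=
  LinearMap.id + LinearMap.smulRight (formL p q v) u
    - LinearMap.smulRight (formL p q u + (stdForm p q u u / 2) • formL p q v) v

lemma eichL_apply (v u x : Fin (p+q) → ℝ) :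
    eichL p q v u x = x + (stdForm p q x v) • u
      - (stdForm p q x u + stdForm p q u u / 2 * stdForm p q x v) • v := rfl

lemma eichL_comp (v u : Fin (p+q) → ℝ) (hv : stdForm p q v v = 0)
    (huv : stdForm p q u v = 0) (x : Fin (p+q) → ℝ) :
    eichL p q v (-u) (eichL p q v u x) = x := by
  have hvu : stdForm p q v u = 0 := by rw [comm]; exact huv
  rw [eichL_apply, eichL_apply]
  set a := stdForm p q x v with ha
  set b := stdForm p q x u with hb
  set s := stdForm p q u u with hs
  set E := x + a • u - (b + s / 2 * a) • v with hE
  have hEv : stdForm p q E v = a := by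
    rw [hE, sub_left, add_left, smul_left, smul_left, huv, hv, ← ha]; ring
  have hEu : stdForm p q E (-u) = -(b + a * s) := by
    have h3 : stdForm p q E u = b + a * s := by
      rw [hE, sub_left, add_left, smul_left, smul_left, hvu, ← hb, ← hs]; ring
    have hnu : stdForm p q E (-u) = - stdForm p q E u := by
      have h2 := smul_right (-1 : ℝ) E u
      simpa using h2
    rw [hnu, h3]
  have hnn : stdForm p q (-u) (-u) = s := by
    rw [show -u = (-1 : ℝ) • u by simp, smul_left, smul_right, ← hs]; ring
  rw [hEv, hEu, hnn, hE]
  module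

lemma form_eichL (v u x z : Fin (p+q) → ℝ) :
    stdForm p q (eichL p q v u x) z = stdForm p q x z
      + stdForm p q x v * stdForm p q u z
      - (stdForm p q x u + stdForm p q u u / 2 * stdForm p q x v) * stdForm p q v z := by
  rw [eichL_apply, sub_left, add_left, smul_left, smul_left]

lemma eichL_isom (v u : Fin (p+q) → ℝ) (hv : stdForm p q v v = 0)
    (huv : stdForm p q u v = 0) (x y : Fin (p+q) → ℝ) :
    stdForm p q (eichL p q v u x) (eichL p q v u y) = stdForm p q x y := by
  have hvu : stdForm p q v u = 0 := by rw [comm]; exact huv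
  rw [form_eichL, eichL_apply]
  rw [sub_right, add_right, smul_right, smul_right,
      sub_right, add_right, smul_right, smul_right,
      sub_right, add_right, smul_right, smul_right]
  rw [huv, hvu, hv, comm v y, comm u y]
  ring

noncomputable def eichE (p q : ℕ) (v u : Fin (p+q) → ℝ) (hv : stdForm p q v v = 0)
    (huv : stdForm p q u v = 0) :
    (Fin (p+q) → ℝ) ≃ₗ[ℝ] (Fin (p+q) → ℝ) :=
  LinearEquiv.ofLinear (eichL p q v u) (eichL p q v (-u))
    (by
      apply LinearMap.ext
      intro x
      have hnuv : stdForm p q (-u) v = 0 := by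
        rw [show -u = (-1 : ℝ) • u by simp, smul_left, huv]; ring
      have := eichL_comp v (-u) hv hnuv x
      simpa using this)
    (by
      apply LinearMap.ext
      intro x
      simpa using eichL_comp v u hv huv x)

lemma eichE_apply (v u x : Fin (p+q) → ℝ) (hv : stdForm p q v v = 0)
    (huv : stdForm p q u v = 0) :
    eichE p q v u hv huv x = x + (stdForm p q x v) • u
      - (stdForm p q x u + stdForm p q u u / 2 * stdForm p q x v) • v := rfl

end StdAux

/-- For the standard form `h` of signature `(p+1,q+1)` on `ℝ^{p+q+2}` and a nonzero null
vector `v`: if `w₁, w₂` are null vectors with `h(v,w₁) = h(v,w₂)` and neither is a scalar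
multiple of `v`, then some isometry of `h` fixes `v` and maps `w₁` to `w₂`. -/
theorem null_stabiliser_transitive (p q : ℕ)
    (v w₁ w₂ : Fin ((p + 1) + (q + 1)) → ℝ)
    (hv0 : v ≠ 0) (hv : stdForm (p + 1) (q + 1) v v = 0)
    (hn₁ : stdForm (p + 1) (q + 1) w₁ w₁ = 0)
    (hn₂ : stdForm (p + 1) (q + 1) w₂ w₂ = 0)
    (hpair : stdForm (p + 1) (q + 1) v w₁ = stdForm (p + 1) (q + 1) v w₂)
    (hm₁ : ¬∃ c : ℝ, w₁ = c • v) (hm₂ : ¬∃ c : ℝ, w₂ = c • v) :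
    ∃ g : (Fin ((p + 1) + (q + 1)) → ℝ) ≃ₗ[ℝ] (Fin ((p + 1) + (q + 1)) → ℝ),
      (∀ x y, stdForm (p + 1) (q + 1) (g x) (g y) = stdForm (p + 1) (q + 1) x y) ∧
      g v = v ∧ g w₁ = w₂ := by
  classical
  by_cases ht : stdForm (p+1) (q+1) v w₁ = 0
  · -- orthogonal case: use reflections
    have hvw₂ : stdForm (p+1) (q+1) v w₂ = 0 := by rw [← hpair]; exact ht
    by_cases hb : stdForm (p+1) (q+1) w₁ w₂ = 0
    · -- need an intermediate null vector x₃
      obtain ⟨y₁, hy₁w, hy₁v, hy₁n⟩ :=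
        StdAux.exists_null_partner v w₁ hv0 hn₁ ht hm₁
      obtain ⟨y₂, hy₂w, hy₂v, hy₂n⟩ :=
        StdAux.exists_null_partner v w₂ hv0 hn₂ hvw₂ hm₂
      have hx₃ : ∃ x₃, stdForm (p+1) (q+1) x₃ x₃ = 0 ∧ stdForm (p+1) (q+1) v x₃ = 0 ∧
          stdForm (p+1) (q+1) w₁ x₃ ≠ 0 ∧ stdForm (p+1) (q+1) x₃ w₂ ≠ 0 := by
        by_cases h12 : stdForm (p+1) (q+1) w₁ y₂ = 0
        · by_cases h21 : stdForm (p+1) (q+1) w₂ y₁ = 0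
          · have hy₁w' : stdForm (p+1) (q+1) y₁ w₁ = 1 := by
              rw [StdAux.comm]; exact hy₁w
            have h12' : stdForm (p+1) (q+1) y₂ w₁ = 0 := by
              rw [StdAux.comm]; exact h12
            have hb' : stdForm (p+1) (q+1) w₂ w₁ = 0 := by
              rw [StdAux.comm]; exact hb
            have hy21 : stdForm (p+1) (q+1) y₂ y₁ = stdForm (p+1) (q+1) y₁ y₂ :=
              StdAux.comm y₂ y₁
            refine ⟨y₁ + y₂ + (-(stdForm (p+1) (q+1) y₁ y₂)) • w₁, ?_, ?_, ?_, ?_⟩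
            · simp only [StdAux.add_left, StdAux.add_right, StdAux.smul_left,
                StdAux.smul_right]
              rw [hy₁n, hy₂n, hn₁, hy21, hy₁w, h12, hy₁w', h12']
              ring
            · simp only [StdAux.add_right, StdAux.smul_right]
              rw [hy₁v, hy₂v, ht]
              ring
            · simp only [StdAux.add_right, StdAux.smul_right]
              rw [hy₁w, h12, hn₁]
              norm_num
            · simp only [StdAux.add_left, StdAux.smul_left]
              have h21' : stdForm (p+1) (q+1) y₁ w₂ = 0 := by
                rw [StdAux.comm]; exact h21
              have hy₂w' : stdForm (p+1) (q+1) y₂ w₂ = 1 := by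
                rw [StdAux.comm]; exact hy₂w
              rw [h21', hy₂w', StdAux.comm w₁ w₂, hb']
              norm_num
          · exact ⟨y₁, hy₁n, hy₁v, by rw [hy₁w]; norm_num,
              by rw [StdAux.comm]; exact h21⟩
        · refine ⟨y₂, hy₂n, hy₂v, h12, ?_⟩
          rw [StdAux.comm y₂ w₂, hy₂w]
          norm_num
      obtain ⟨x₃, hx₃n, hvx₃, h1x₃, hx₃2⟩ := hx₃
      obtain ⟨g₁, hg₁i, hg₁a, hg₁f⟩ :=
        StdAux.exists_reflect w₁ x₃ hn₁ hx₃n h1x₃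
      obtain ⟨g₂, hg₂i, hg₂a, hg₂f⟩ :=
        StdAux.exists_reflect x₃ w₂ hx₃n hn₂ hx₃2
      refine ⟨g₁.trans g₂, ?_, ?_, ?_⟩
      · intro x y
        simp only [LinearEquiv.trans_apply]
        rw [hg₂i, hg₁i]
      · simp only [LinearEquiv.trans_apply]
        rw [hg₁f v ht hvx₃, hg₂f v hvx₃ hvw₂]
      · simp only [LinearEquiv.trans_apply]
        rw [hg₁a, hg₂a]
    · obtain ⟨g, hgi, hga, hgf⟩ := StdAux.exists_reflect w₁ w₂ hn₁ hn₂ hb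
      exact ⟨g, hgi, hgf v ht hvw₂, hga⟩
  · -- non-orthogonal case: a single Eichler transvection
    set t := stdForm (p+1) (q+1) v w₁ with htdef
    set u : Fin ((p+1) + (q+1)) → ℝ := t⁻¹ • (w₂ - w₁) with hu
    have huv : stdForm (p+1) (q+1) u v = 0 := by
      rw [hu, StdAux.smul_left, StdAux.sub_left, StdAux.comm w₂ v,
        StdAux.comm w₁ v, ← hpair, ← htdef]
      ring
    refine ⟨StdAux.eichE (p+1) (q+1) v u hv huv, fun x y => StdAux.eichL_isom v u hv huv x y, ?_, ?_⟩
    · rw [StdAux.eichE_apply, hv, StdAux.comm v u, huv]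
      simp
    · rw [StdAux.eichE_apply]
      have hw₁v : stdForm (p+1) (q+1) w₁ v = t := by rw [StdAux.comm, ← htdef]
      have hw₁u : stdForm (p+1) (q+1) w₁ u = t⁻¹ * stdForm (p+1) (q+1) w₁ w₂ := by
        rw [hu, StdAux.smul_right, StdAux.sub_right, hn₁]; ring
      have huu : stdForm (p+1) (q+1) u u = t⁻¹ * t⁻¹ * (-2 * stdForm (p+1) (q+1) w₁ w₂) := by
        rw [hu, StdAux.smul_left, StdAux.smul_right, StdAux.sub_left,
          StdAux.sub_right, StdAux.sub_right, hn₁, hn₂, StdAux.comm w₂ w₁]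
        ring
      have hcoef : stdForm (p+1) (q+1) w₁ u + stdForm (p+1) (q+1) u u / 2 * stdForm (p+1) (q+1) w₁ v = 0 := by
        rw [hw₁u, huu, hw₁v]
        field_simp
        ring
      have htu : t • u = w₂ - w₁ := by
        rw [hu, smul_smul, mul_inv_cancel₀ ht, one_smul]
      rw [hcoef, hw₁v, htu]
      module
end

section
/- Let p, q ≥ 0 and let h be the standard Hermitian form of signature (p,q) on ℂ^{p+q}. For nonzero vectors v, w ∈ ℂ^{p+q}, there exists a ℂ-linear automorphism g of ℂ^{p+q} preserving h (h(gx,gy) = h(x,y) for all x,y) with g(ℂv) = ℂw if and only if the real numbers h(v,v) and h(w,w) have the same sign (both positive, both zero, or both negative). In other words, the orbits of the unitary group of h on the space of complex lines are classified by the sign of the restriction of h to the line. -/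
/-- The standard Hermitian form of signature `(p,q)` on `ℂ^{p+q}`:
`h(v,w) = Σ_{i<p} conj(vᵢ)wᵢ − Σ_{i≥p} conj(vᵢ)wᵢ` (conjugate-linear in the first
argument; `h(v,v)` is always real). -/
noncomputable def stdHermForm (p q : ℕ) (v w : Fin (p + q) → ℂ) : ℂ :=
  ∑ i : Fin (p + q),
    (if (i : ℕ) < p then (1 : ℂ) else -1) * (starRingEnd ℂ) (v i) * w i


namespace SHF
variable (p q : ℕ)
local notation "S" => stdHermForm p q
local notation "V" => (Fin (p + q) → ℂ)
local notation "conj'" => starRingEnd ℂ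

variable {p q}

lemma add_right (x y z : V) : S x (y + z) = S x y + S x z := by
  simp [stdHermForm, ← Finset.sum_add_distrib, mul_add]

lemma smul_right (a : ℂ) (x y : V) : S x (a • y) = a * S x y := by
  simp [stdHermForm, Finset.mul_sum]; ring_nf
  exact Finset.sum_congr rfl fun i _ => by ring

lemma conj_symm (x y : V) : conj' (S x y) = S y x := by
  simp only [stdHermForm, map_sum]
  refine Finset.sum_congr rfl fun i _ => ?_
  by_cases h : (i : ℕ) < p <;> simp [h, map_mul] <;> ring

lemma add_left (x y z : V) : S (x + y) z = S x z + S y z := by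
  rw [← conj_symm, add_right, map_add, conj_symm, conj_symm]

lemma smul_left (a : ℂ) (x y : V) : S (a • x) y = conj' a * S x y := by
  rw [← conj_symm, smul_right, map_mul, conj_symm]

lemma sub_right (x y z : V) : S x (y - z) = S x y - S x z := by
  have := add_right x (y - z) z; simp at this
  exact eq_sub_of_add_eq this.symm

lemma sub_left (x y z : V) : S (x - y) z = S x z - S y z := by
  rw [← conj_symm, sub_right, map_sub, conj_symm, conj_symm]

lemma self_real (x : V) : conj' (S x x) = S x x := conj_symm x x

lemma self_eq_re (x : V) : S x x = ((S x x).re : ℂ) :=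
  (Complex.conj_eq_iff_re.mp (self_real x)).symm

lemma single_pair (v : V) (j : Fin (p + q)) :
    S v (Pi.single j 1) = (if (j : ℕ) < p then (1:ℂ) else -1) * conj' (v j) := by
  simp [stdHermForm, Pi.single_apply, mul_ite, Finset.sum_ite_eq']

/-- The relation: some isometry of the form maps the line of `v` to the line of `w`. -/
def Rel (p q : ℕ) (v w : Fin (p + q) → ℂ) : Prop :=
  ∃ g : (Fin (p + q) → ℂ) ≃ₗ[ℂ] (Fin (p + q) → ℂ),
    (∀ x y, stdHermForm p q (g x) (g y) = stdHermForm p q x y) ∧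
    ∃ c : ℂ, c ≠ 0 ∧ g v = c • w

lemma rel_refl (v : V) : Rel p q v v :=
  ⟨LinearEquiv.refl ℂ _, fun _ _ => rfl, 1, one_ne_zero, (one_smul ℂ v).symm⟩

lemma rel_symm {v w : V} (h : Rel p q v w) : Rel p q w v := by
  obtain ⟨g, hg, c, hc, hgv⟩ := h
  refine ⟨g.symm, fun x y => ?_, c⁻¹, inv_ne_zero hc, ?_⟩
  · rw [← hg (g.symm x) (g.symm y), g.apply_symm_apply, g.apply_symm_apply]
  · have : g.symm (c • w) = v := by rw [← hgv, g.symm_apply_apply]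
    rw [map_smul] at this
    rw [← this, smul_smul, inv_mul_cancel₀ hc, one_smul]

lemma rel_trans {u v w : V} (h1 : Rel p q u v) (h2 : Rel p q v w) : Rel p q u w := by
  obtain ⟨g1, hg1, c1, hc1, h1⟩ := h1
  obtain ⟨g2, hg2, c2, hc2, h2⟩ := h2
  refine ⟨g1.trans g2, fun x y => by simp [hg2, hg1], c1 * c2, mul_ne_zero hc1 hc2, ?_⟩
  simp only [LinearEquiv.trans_apply, h1, map_smul, h2, smul_smul]

lemma rel_smul (v : V) {c : ℂ} (hc : c ≠ 0) : Rel p q v (c • v) :=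
  ⟨LinearEquiv.refl ℂ _, fun _ _ => rfl, c⁻¹, inv_ne_zero hc,
    by simp [smul_smul, inv_mul_cancel₀ hc]⟩

/-- Reflection in a non-isotropic vector `u`. -/
lemma reflect (u : V) (huu : S u u ≠ 0) :
    ∃ g : V ≃ₗ[ℂ] V, (∀ x y, S (g x) (g y) = S x y) ∧
      ∀ x, g x = x - (2 * S u x / S u u) • u := by
  set f : V →ₗ[ℂ] V :=
    { toFun := fun x => x - (2 * S u x / S u u) • u
      map_add' := fun x y => by
        have : (2 * S u (x + y) / S u u) • u
            = (2 * S u x / S u u) • u + (2 * S u y / S u u) • u := by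
          rw [add_right, ← add_smul]; ring_nf
        rw [this]; abel
      map_smul' := fun a x => by
        have : (2 * S u (a • x) / S u u) • u = a • ((2 * S u x / S u u) • u) := by
          rw [smul_right, smul_smul]; ring_nf
        simp only [RingHom.id_apply, this, smul_sub] } with hf
  have hfx : ∀ x, f x = x - (2 * S u x / S u u) • u := fun x => rfl
  have hinv : Function.Involutive f := by
    intro x
    rw [hfx, hfx x, sub_right, smul_right]
    have hs : 2 * (S u x - 2 * S u x / S u u * S u u) / S u u
        = -(2 * S u x / S u u) := by field_simp; ring
    rw [hs, neg_smul]; abel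
  refine ⟨LinearEquiv.ofInvolutive f hinv, fun x y => ?_, hfx⟩
  show S (f x) (f y) = S x y
  rw [hfx, hfx, sub_right, sub_left, sub_left, smul_right, smul_left, smul_left,
    smul_right]
  have h2 : conj' (2:ℂ) = 2 := by
    rw [Complex.conj_eq_iff_im]; norm_num
  have hxu : S x u = conj' (S u x) := (conj_symm u x).symm
  simp only [map_div₀, map_mul, h2, self_real, hxu]
  field_simp
  ring

lemma pair {v w : V} (hn : S v v = S w w) (hb : S v w ≠ 0) : Rel p q v w := by
  set b := S v w with hbdef
  set m : ℝ := ‖b‖ with hm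
  have hm0 : (m : ℂ) ≠ 0 := by
    simp only [hm, ne_eq, Complex.ofReal_eq_zero, norm_eq_zero]; exact hb
  have hcb : conj' b ≠ 0 := by simpa using hb
  set lam : ℂ := conj' b / (m : ℂ) with hlam
  have hlam0 : lam ≠ 0 := div_ne_zero hcb hm0
  have hkey : conj' b * b = ((m : ℂ)) ^ 2 := by
    rw [mul_comm, Complex.mul_conj, hm]
    norm_cast
    rw [← Complex.sq_norm]
  set w' : V := lam • w with hw'
  have hvw' : S v w' = (m : ℂ) := by
    rw [hw', smul_right, hlam, div_mul_eq_mul_div, hkey]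
    field_simp
  have hw'w' : S w' w' = S w w := by
    rw [hw', smul_right, smul_left, hlam, map_div₀, Complex.conj_conj,
      Complex.conj_ofReal]
    field_simp
    linear_combination S w w * hkey
  have hconjs : conj' ((m : ℂ)) = (m : ℂ) := Complex.conj_ofReal m
  set r := S v v with hr
  have hw'v : S w' v = conj' ((m:ℂ)) := by rw [← conj_symm, hvw']
  -- relate to w' at the end
  have main : Rel p q v w' := by
    by_cases hd : r - (m : ℂ) ≠ 0
    · have hSuv : S (v - w') v = r - (m:ℂ) := by
        rw [sub_left, hw'v, hconjs, ← hr]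
      have hSuu : S (v - w') (v - w') = 2 * r - 2 * (m:ℂ) := by
        rw [sub_right, sub_left, sub_left, hvw', hw'v, hconjs, hw'w', ← hn, ← hr]
        ring
      have hSuu0 : S (v - w') (v - w') ≠ 0 := by
        rw [hSuu]; intro hcon; apply hd; linear_combination hcon / 2
      obtain ⟨g, hg, hgx⟩ := reflect (v - w') hSuu0
      refine ⟨g, hg, 1, one_ne_zero, ?_⟩
      rw [hgx, hSuv, hSuu]
      have hco : 2 * (r - (m:ℂ)) / (2 * r - 2 * (m:ℂ)) = 1 := by
        rw [div_eq_one_iff_eq (by intro hcon; apply hd; linear_combination hcon/2)]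
        ring
      rw [hco, one_smul, one_smul]
      abel
    · push_neg at hd
      have hrm : r = (m : ℂ) := by linear_combination hd
      have hSuv : S (v + w') v = 2 * (m:ℂ) := by
        rw [add_left, hw'v, hconjs, ← hr, hrm]; ring
      have hSuu : S (v + w') (v + w') = 4 * (m:ℂ) := by
        rw [add_right, add_left, add_left, hvw', hw'v, hconjs, hw'w', ← hn, ← hr, hrm]
        ring
      have hSuu0 : S (v + w') (v + w') ≠ 0 := by
        rw [hSuu]; intro hcon; apply hm0; linear_combination hcon / 4
      obtain ⟨g, hg, hgx⟩ := reflect (v + w') hSuu0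
      refine ⟨g, hg, -1, by norm_num, ?_⟩
      rw [hgx, hSuv, hSuu]
      have hco : 2 * (2 * (m:ℂ)) / (4 * (m:ℂ)) = 1 := by
        rw [div_eq_one_iff_eq (by intro hcon; apply hm0; linear_combination hcon/4)]
        ring
      rw [hco, one_smul, neg_one_smul]
      module
  exact rel_trans main (rel_symm (rel_smul w hlam0))

lemma orth {v w : V} (hn : S v v = S w w) (hr0 : S v v ≠ 0) (hb : S v w = 0) :
    Rel p q v w := by
  have hwv : S w v = 0 := by rw [← conj_symm, hb, map_zero]
  set r := S v v with hr
  have hSuv : S (v - w) v = r := by rw [sub_left, hwv, ← hr, sub_zero]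
  have hSuu : S (v - w) (v - w) = 2 * r := by
    rw [sub_right, sub_left, sub_left, hb, hwv, ← hn, ← hr]; ring
  have hSuu0 : S (v - w) (v - w) ≠ 0 := by
    rw [hSuu]; intro hcon; apply hr0; linear_combination hcon / 2
  obtain ⟨g, hg, hgx⟩ := reflect (v - w) hSuu0
  refine ⟨g, hg, 1, one_ne_zero, ?_⟩
  rw [hgx, hSuv, hSuu]
  have hco : 2 * r / (2 * r) = 1 := by
    rw [div_self]; intro hcon; apply hr0; linear_combination hcon / 2
  rw [hco, one_smul, one_smul]
  abel

lemma exists_nondeg {v : V} (hv : v ≠ 0) : ∃ z : V, S v z ≠ 0 := by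
  obtain ⟨j, hj⟩ := Function.ne_iff.mp hv
  refine ⟨Pi.single j 1, ?_⟩
  rw [single_pair]
  simp only [Pi.zero_apply] at hj
  by_cases h : (j : ℕ) < p <;> simp [h, hj]

lemma isotropic_partner {v : V} (hv : v ≠ 0) (h0 : S v v = 0) :
    ∃ z : V, S z z = 0 ∧ S v z ≠ 0 := by
  obtain ⟨z0, hb⟩ := exists_nondeg hv
  set b := S v z0 with hbdef
  set a := S z0 z0 with hadef
  have hca : conj' a = a := self_real z0
  have hcb : conj' b ≠ 0 := by simpa using hb
  set t : ℂ := -a / (2 * conj' b) with ht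
  refine ⟨z0 + t • v, ?_, ?_⟩
  · rw [add_right, add_left, add_left, smul_right, smul_right, smul_left, smul_left,
      h0, ← hadef, ← hbdef]
    have hct : conj' t = -a / (2 * b) := by
      rw [ht, map_div₀, map_neg, hca, map_mul, Complex.conj_conj]
      congr 2
      rw [Complex.conj_eq_iff_im]; norm_num
    have hz0v : S z0 v = conj' b := by rw [← conj_symm, hbdef]
    rw [hct, hz0v, ht]
    field_simp
    ring
  · rw [add_right, smul_right, h0, ← hbdef, mul_zero, add_zero]
    exact hb

lemma common_partner {v w : V} (hv : v ≠ 0) (hw : w ≠ 0) (hv0 : S v v = 0)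
    (hw0 : S w w = 0) : ∃ z : V, S z z = 0 ∧ S v z ≠ 0 ∧ S w z ≠ 0 := by
  obtain ⟨z1, hz1, hvz1⟩ := isotropic_partner hv hv0
  obtain ⟨z2, hz2, hwz2⟩ := isotropic_partner hw hw0
  by_cases h1 : S v z2 ≠ 0
  · exact ⟨z2, hz2, h1, hwz2⟩
  by_cases h2 : S w z1 ≠ 0
  · exact ⟨z1, hz1, hvz1, h2⟩
  push_neg at h1 h2
  set c := S z1 z2 with hcdef
  set t : ℂ := if c = 0 then 1 else Complex.I / c with ht
  have ht0 : t ≠ 0 := by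
    rw [ht]; split
    · exact one_ne_zero
    · exact div_ne_zero Complex.I_ne_zero (by assumption)
  refine ⟨z1 + t • z2, ?_, ?_, ?_⟩
  · rw [add_right, add_left, add_left, smul_right, smul_right, smul_left, smul_left,
      hz1, hz2, ← hcdef]
    have hz2z1 : S z2 z1 = conj' c := by rw [← conj_symm, hcdef]
    rw [hz2z1]
    by_cases hc : c = 0
    · simp [hc]
    · rw [ht, if_neg hc, map_div₀, Complex.conj_I]
      have hcc : conj' c ≠ 0 := by simpa using hc
      field_simp
      ring
  · rw [add_right, smul_right, h1, mul_zero, add_zero]; exact hvz1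
  · rw [add_right, smul_right, h2, zero_add]
    exact mul_ne_zero ht0 hwz2

lemma main_eq {v w : V} (hv : v ≠ 0) (hw : w ≠ 0) (hn : S v v = S w w) :
    Rel p q v w := by
  by_cases hb : S v w ≠ 0
  · exact pair hn hb
  push_neg at hb
  by_cases hr : S v v ≠ 0
  · exact orth hn hr hb
  push_neg at hr
  have hw0 : S w w = 0 := by rw [← hn, hr]
  obtain ⟨z, hzz, hvz, hwz⟩ := common_partner hv hw hr hw0
  have h1 : Rel p q v z := pair (by rw [hr, hzz]) hvz
  have h2 : Rel p q z w := by
    refine pair (by rw [hzz, hw0]) ?_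
    intro hcon
    apply hwz
    rw [← conj_symm w z] at hcon
    have := congrArg conj' hcon
    rwa [Complex.conj_conj, map_zero] at this
  exact rel_trans h1 h2

lemma rel_of_ratio {v w : V} (hv : v ≠ 0) (hw : w ≠ 0)
    (h1 : (S v v).re ≠ 0) (hpos : 0 < (S w w).re / (S v v).re) : Rel p q v w := by
  set r1 := (S v v).re with hr1
  set r2 := (S w w).re with hr2
  set t : ℝ := Real.sqrt (r2 / r1) with htd
  have htpos : 0 < t := Real.sqrt_pos.mpr hpos
  have ht2 : t * t * r1 = r2 := by
    have h := Real.mul_self_sqrt hpos.le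
    rw [← htd] at h
    rw [h, div_mul_cancel₀ _ h1]
  have htne : (t : ℂ) ≠ 0 := by
    simp only [ne_eq, Complex.ofReal_eq_zero]; exact ne_of_gt htpos
  have hrel1 : Rel p q v ((t : ℂ) • v) := rel_smul v htne
  have hv' : (t : ℂ) • v ≠ 0 := smul_ne_zero htne hv
  have hn : S ((t:ℂ) • v) ((t:ℂ) • v) = S w w := by
    rw [smul_left, smul_right, Complex.conj_ofReal, self_eq_re v, self_eq_re w,
      ← hr1, ← hr2, ← ht2]
    push_cast
    ring
  exact rel_trans hrel1 (main_eq hv' hw hn)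

end SHF

/-- For nonzero `v, w ∈ ℂ^{p+q}`, there is a `ℂ`-linear automorphism `g` preserving the
standard Hermitian form `h` of signature `(p,q)` with `g(ℂv) = ℂw` iff the real numbers
`h(v,v)` and `h(w,w)` have the same sign: the orbits of the unitary group on complex
lines are classified by the sign of the restriction of `h` to the line. -/
theorem complex_line_orbits_classified_by_sign (p q : ℕ) (v w : Fin (p + q) → ℂ)
    (hv : v ≠ 0) (hw : w ≠ 0) :
    (∃ g : (Fin (p + q) → ℂ) ≃ₗ[ℂ] (Fin (p + q) → ℂ),
        (∀ x y, stdHermForm p q (g x) (g y) = stdHermForm p q x y) ∧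
        ∃ c : ℂ, c ≠ 0 ∧ g v = c • w) ↔
      ((0 < (stdHermForm p q v v).re ∧ 0 < (stdHermForm p q w w).re) ∨
       (stdHermForm p q v v = 0 ∧ stdHermForm p q w w = 0) ∨
       ((stdHermForm p q v v).re < 0 ∧ (stdHermForm p q w w).re < 0)) := by
  constructor
  · rintro ⟨g, hg, c, hc, hgv⟩
    have e : stdHermForm p q v v
        = ((Complex.normSq c : ℝ) : ℂ) * stdHermForm p q w w := by
      rw [← hg v v, hgv, SHF.smul_left, SHF.smul_right, ← mul_assoc,
        ← Complex.normSq_eq_conj_mul_self]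
    have ere : (stdHermForm p q v v).re = Complex.normSq c * (stdHermForm p q w w).re := by
      rw [e, Complex.re_ofReal_mul]
    have hk : 0 < Complex.normSq c := Complex.normSq_pos.mpr hc
    rcases lt_trichotomy 0 (stdHermForm p q w w).re with h | h | h
    · exact Or.inl ⟨by rw [ere]; positivity, h⟩
    · refine Or.inr (Or.inl ⟨?_, ?_⟩)
      · rw [e, SHF.self_eq_re w, ← h]; simp
      · rw [SHF.self_eq_re w, ← h]; simp
    · exact Or.inr (Or.inr ⟨by rw [ere]; exact mul_neg_of_pos_of_neg hk h, h⟩)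
  · rintro (⟨h1, h2⟩ | ⟨h1, h2⟩ | ⟨h1, h2⟩)
    · exact SHF.rel_of_ratio hv hw (ne_of_gt h1) (div_pos h2 h1)
    · exact SHF.main_eq hv hw (by rw [h1, h2])
    · exact SHF.rel_of_ratio hv hw (ne_of_lt h1)
        (div_pos_iff.mpr (Or.inr ⟨h2, h1⟩))
end

section
/- Let p, q ≥ 0 and let h be the standard Hermitian form of signature (p+1,q+1) on ℂ^{p+q+2}. Let v ∈ ℂ^{p+q+2} satisfy h(v,v) = −1. If u₁, u₂ are nonzero vectors with h(u₁,u₁) = h(u₂,u₂) = 0, h(v,u₁) ≠ 0 and h(v,u₂) ≠ 0, then there exists a ℂ-linear automorphism g of ℂ^{p+q+2} with h(gx,gy) = h(x,y) for all x,y, g v = v, and g(ℂu₁) = ℂu₂. In other words, the stabiliser of v in the unitary group of h acts transitively on the set of isotropic complex lines not contained in v^⊥. -/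
section lemmas
variable {p q : ℕ}

lemma stdH_add_right (x y z : Fin (p + q) → ℂ) :
    stdHermForm p q x (y + z) = stdHermForm p q x y + stdHermForm p q x z := by
  simp [stdHermForm, mul_add, Finset.sum_add_distrib]

lemma stdH_sub_right (x y z : Fin (p + q) → ℂ) :
    stdHermForm p q x (y - z) = stdHermForm p q x y - stdHermForm p q x z := by
  simp [stdHermForm, mul_sub, Finset.sum_sub_distrib]

lemma stdH_smul_right (c : ℂ) (x y : Fin (p + q) → ℂ) :
    stdHermForm p q x (c • y) = c * stdHermForm p q x y := by
  simp only [stdHermForm, Finset.mul_sum, Pi.smul_apply, smul_eq_mul]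
  exact Finset.sum_congr rfl fun i _ => by ring

lemma stdH_conj (x y : Fin (p + q) → ℂ) :
    (starRingEnd ℂ) (stdHermForm p q x y) = stdHermForm p q y x := by
  simp only [stdHermForm, map_sum, map_mul, Complex.conj_conj]
  refine Finset.sum_congr rfl fun i _ => ?_
  by_cases h : (i : ℕ) < p <;> simp [h] <;> ring

lemma stdH_add_left (x y z : Fin (p + q) → ℂ) :
    stdHermForm p q (x + y) z = stdHermForm p q x z + stdHermForm p q y z := by
  rw [← stdH_conj, stdH_add_right, map_add, stdH_conj, stdH_conj]

lemma stdH_sub_left (x y z : Fin (p + q) → ℂ) :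
    stdHermForm p q (x - y) z = stdHermForm p q x z - stdHermForm p q y z := by
  rw [← stdH_conj, stdH_sub_right, map_sub, stdH_conj, stdH_conj]

lemma stdH_smul_left (c : ℂ) (x y : Fin (p + q) → ℂ) :
    stdHermForm p q (c • x) y = (starRingEnd ℂ) c * stdHermForm p q x y := by
  rw [← stdH_conj, stdH_smul_right, map_mul, stdH_conj]

/-- Constructor for "complex reflection"-type isometries `x ↦ x + (μ * h(z,x)) • z`. -/
lemma exists_refl_isometry (z : Fin (p + q) → ℂ) (μ : ℂ)
    (hμ : μ + (starRingEnd ℂ) μ + μ * (starRingEnd ℂ) μ * stdHermForm p q z z = 0) :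
    ∃ g : (Fin (p + q) → ℂ) ≃ₗ[ℂ] (Fin (p + q) → ℂ),
      (∀ x y, stdHermForm p q (g x) (g y) = stdHermForm p q x y) ∧
      (∀ x, g x = x + (μ * stdHermForm p q z x) • z) := by
  set G := stdHermForm p q z z with hG
  refine ⟨{ toFun := fun x => x + (μ * stdHermForm p q z x) • z
            invFun := fun x => x + ((starRingEnd ℂ) μ * stdHermForm p q z x) • z
            map_add' := by
              intro x y
              rw [stdH_add_right]
              module
            map_smul' := by
              intro c x
              rw [stdH_smul_right]
              simp only [RingHom.id_apply]
              module
            left_inv := by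
              intro x
              dsimp only
              rw [stdH_add_right, stdH_smul_right]
              have : ((starRingEnd ℂ) μ * (stdHermForm p q z x
                  + μ * stdHermForm p q z x * G)) = - (μ * stdHermForm p q z x) := by
                linear_combination stdHermForm p q z x * hμ
              rw [this]
              module
            right_inv := by
              intro x
              dsimp only
              rw [stdH_add_right, stdH_smul_right]
              have : (μ * (stdHermForm p q z x
                  + (starRingEnd ℂ) μ * stdHermForm p q z x * G)) = - ((starRingEnd ℂ) μ * stdHermForm p q z x) := by
                linear_combination stdHermForm p q z x * hμ
              rw [this]
              module }, ?_, fun x => rfl⟩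
  intro x y
  simp only [LinearEquiv.coe_mk, LinearEquiv.coe_symm_mk, LinearMap.coe_mk, AddHom.coe_mk]
  rw [stdH_add_right, stdH_add_left, stdH_add_left, stdH_smul_right, stdH_smul_left,
    stdH_smul_left, stdH_smul_right]
  have h1 : stdHermForm p q x z = (starRingEnd ℂ) (stdHermForm p q z x) := (stdH_conj z x).symm
  rw [h1]
  simp only [map_mul]
  linear_combination ((starRingEnd ℂ) (stdHermForm p q z x) * stdHermForm p q z y) * hμ

/-- The stabiliser of `v` acts transitively on unit vectors orthogonal to `v`. -/
lemma exists_isometry_fix_map (v w₁ w₂ : Fin (p + q) → ℂ)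
    (hv1 : stdHermForm p q v w₁ = 0) (hv2 : stdHermForm p q v w₂ = 0)
    (h1 : stdHermForm p q w₁ w₁ = 1) (h2 : stdHermForm p q w₂ w₂ = 1) :
    ∃ g : (Fin (p + q) → ℂ) ≃ₗ[ℂ] (Fin (p + q) → ℂ),
      (∀ x y, stdHermForm p q (g x) (g y) = stdHermForm p q x y) ∧
      g v = v ∧ g w₁ = w₂ := by
  set t := stdHermForm p q w₁ w₂ with ht
  set lam : ℂ := if t = 0 then 1 else -(t / (‖t‖ : ℂ)) with hlamdef
  set r : ℝ := if t = 0 then 0 else -(‖t‖) with hrdef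
  have habs : lam * (starRingEnd ℂ) lam = 1 := by
    by_cases h : t = 0
    · simp [hlamdef, h]
    · have ha : (‖t‖ : ℂ) ≠ 0 := by
        simpa using norm_ne_zero_iff.mpr h
      simp only [hlamdef, if_neg h, map_neg, map_div₀, Complex.conj_ofReal]
      have hmc : t * (starRingEnd ℂ) t = ((‖t‖ : ℂ)) ^ 2 := by
        rw [Complex.mul_conj, Complex.normSq_eq_norm_sq]; push_cast; ring
      field_simp
      linear_combination hmc
  have hr : (starRingEnd ℂ) lam * t = (r : ℂ) := by
    by_cases h : t = 0
    · simp [h, hrdef]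
    · have ha : (‖t‖ : ℂ) ≠ 0 := by
        simpa using norm_ne_zero_iff.mpr h
      simp only [hlamdef, hrdef, if_neg h, map_neg, map_div₀, Complex.conj_ofReal]
      rw [neg_mul, div_mul_eq_mul_div]
      rw [mul_comm ((starRingEnd ℂ) t) t, Complex.mul_conj, Complex.normSq_eq_norm_sq]
      push_cast
      field_simp
  have hrconj : lam * (starRingEnd ℂ) t = (r : ℂ) := by
    have := congrArg (starRingEnd ℂ) hr
    simpa [map_mul, mul_comm] using this
  have hrle : r ≤ 0 := by
    by_cases h : t = 0
    · simp [hrdef, h]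
    · simp only [hrdef, if_neg h]
      exact neg_nonpos.mpr (norm_nonneg t)
  have hrne : (2 : ℝ) - 2 * r ≠ 0 := by nlinarith
  have hrneC : (2 : ℂ) - 2 * (r : ℂ) ≠ 0 := by
    intro h
    apply hrne
    have := congrArg Complex.re h
    push_cast at this
    simpa using this
  -- first reflection: w₁ ↦ lam • w₁
  have cond1 : (lam - 1) + (starRingEnd ℂ) (lam - 1)
      + (lam - 1) * (starRingEnd ℂ) (lam - 1) * stdHermForm p q w₁ w₁ = 0 := by
    rw [h1]
    simp only [map_sub, map_one]
    linear_combination habs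
  obtain ⟨g₁, hg₁iso, hg₁⟩ := exists_refl_isometry w₁ (lam - 1) cond1
  have hw₁v : stdHermForm p q w₁ v = 0 := by rw [← stdH_conj, hv1, map_zero]
  have hg₁v : g₁ v = v := by rw [hg₁, hw₁v]; simp
  have hg₁w₁ : g₁ w₁ = lam • w₁ := by
    rw [hg₁, h1]
    module
  -- second reflection: lam • w₁ ↦ w₂
  set z := lam • w₁ - w₂ with hz
  have hw₂w₁ : stdHermForm p q w₂ w₁ = (starRingEnd ℂ) t := by rw [← stdH_conj, ht]
  have hzz : stdHermForm p q z z = 2 - 2 * (r : ℂ) := by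
    rw [hz, stdH_sub_left, stdH_sub_right, stdH_sub_right, stdH_smul_left, stdH_smul_right,
      stdH_smul_right, stdH_smul_left, h1, h2, hw₂w₁, ← ht]
    linear_combination habs - hr - hrconj
  set μ₂ : ℂ := ((-2 / (2 - 2 * r) : ℝ) : ℂ) with hμ₂
  have hμ₂conj : (starRingEnd ℂ) μ₂ = μ₂ := Complex.conj_ofReal _
  have cond2 : μ₂ + (starRingEnd ℂ) μ₂ + μ₂ * (starRingEnd ℂ) μ₂ * stdHermForm p q z z = 0 := by
    rw [hμ₂conj, hzz, hμ₂]
    have : ((2 : ℂ) - 2 * r) = ((2 - 2 * r : ℝ) : ℂ) := by push_cast; ring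
    rw [this]
    norm_cast
    have hr1 : (1:ℝ) - r ≠ 0 := fun h => hrne (by linarith)
    field_simp
    simp only [Int.cast_negSucc]
    norm_num
  obtain ⟨g₂, hg₂iso, hg₂⟩ := exists_refl_isometry z μ₂ cond2
  have hw₂v : stdHermForm p q w₂ v = 0 := by rw [← stdH_conj, hv2, map_zero]
  have hzv : stdHermForm p q z v = 0 := by
    rw [hz, stdH_sub_left, stdH_smul_left, hw₁v, hw₂v]
    ring
  have hg₂v : g₂ v = v := by rw [hg₂, hzv]; simp
  have hzlw : stdHermForm p q z (lam • w₁) = 1 - (r : ℂ) := by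
    rw [hz, stdH_sub_left, stdH_smul_right, stdH_smul_right, stdH_smul_left, h1, hw₂w₁]
    linear_combination habs - hrconj
  have hμval : μ₂ * ((1 : ℂ) - (r : ℂ)) = -1 := by
    rw [hμ₂]
    push_cast
    have hr1C : (1:ℂ) - (r:ℂ) ≠ 0 := fun h => hrneC (by linear_combination 2 * h)
    field_simp
  have hg₂lw : g₂ (lam • w₁) = w₂ := by
    rw [hg₂, hzlw, hμval, hz]
    module
  refine ⟨g₁.trans g₂, fun x y => by
      simp only [LinearEquiv.trans_apply, hg₂iso, hg₁iso], ?_, ?_⟩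
  · simp only [LinearEquiv.trans_apply, hg₁v, hg₂v]
  · simp only [LinearEquiv.trans_apply, hg₁w₁, hg₂lw]

end lemmas

/-- For the standard Hermitian form `h` of signature `(p+1,q+1)` on `ℂ^{p+q+2}` and a
vector `v` with `h(v,v) = −1`: if `u₁, u₂` are nonzero null vectors with `h(v,u₁) ≠ 0`
and `h(v,u₂) ≠ 0`, then some `ℂ`-linear automorphism preserving `h` fixes `v` and maps
the line `ℂu₁` onto the line `ℂu₂`; i.e. the stabiliser of `v` in the unitary group acts
transitively on isotropic complex lines not contained in `v^⊥`. -/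
theorem stabiliser_transitive_on_transversal_isotropic_lines (p q : ℕ)
    (v u₁ u₂ : Fin ((p + 1) + (q + 1)) → ℂ)
    (hv : stdHermForm (p + 1) (q + 1) v v = -1)
    (hu₁ : u₁ ≠ 0) (hu₂ : u₂ ≠ 0)
    (hn₁ : stdHermForm (p + 1) (q + 1) u₁ u₁ = 0)
    (hn₂ : stdHermForm (p + 1) (q + 1) u₂ u₂ = 0)
    (ht₁ : stdHermForm (p + 1) (q + 1) v u₁ ≠ 0)
    (ht₂ : stdHermForm (p + 1) (q + 1) v u₂ ≠ 0) :
    ∃ g : (Fin ((p + 1) + (q + 1)) → ℂ) ≃ₗ[ℂ] (Fin ((p + 1) + (q + 1)) → ℂ),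
      (∀ x y, stdHermForm (p + 1) (q + 1) (g x) (g y) =
        stdHermForm (p + 1) (q + 1) x y) ∧
      g v = v ∧ ∃ c : ℂ, c ≠ 0 ∧ g u₁ = c • u₂ := by
  set a₁ := stdHermForm (p + 1) (q + 1) v u₁ with ha₁
  set a₂ := stdHermForm (p + 1) (q + 1) v u₂ with ha₂
  set w₁ : Fin ((p + 1) + (q + 1)) → ℂ := a₁⁻¹ • u₁ + v with hw₁def
  set w₂ : Fin ((p + 1) + (q + 1)) → ℂ := a₂⁻¹ • u₂ + v with hw₂def
  have hc₁ : a₁⁻¹ * a₁ = 1 := inv_mul_cancel₀ ht₁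
  have hc₂ : a₂⁻¹ * a₂ = 1 := inv_mul_cancel₀ ht₂
  have hvw₁ : stdHermForm (p + 1) (q + 1) v w₁ = 0 := by
    rw [hw₁def, stdH_add_right, stdH_smul_right, ← ha₁, hv]
    linear_combination hc₁
  have hvw₂ : stdHermForm (p + 1) (q + 1) v w₂ = 0 := by
    rw [hw₂def, stdH_add_right, stdH_smul_right, ← ha₂, hv]
    linear_combination hc₂
  have hconj₁ : (starRingEnd ℂ) a₁⁻¹ * (starRingEnd ℂ) a₁ = 1 := by
    rw [← map_mul, hc₁, map_one]
  have hconj₂ : (starRingEnd ℂ) a₂⁻¹ * (starRingEnd ℂ) a₂ = 1 := by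
    rw [← map_mul, hc₂, map_one]
  have hu₁v : stdHermForm (p + 1) (q + 1) u₁ v = (starRingEnd ℂ) a₁ := by
    rw [← stdH_conj, ha₁]
  have hu₂v : stdHermForm (p + 1) (q + 1) u₂ v = (starRingEnd ℂ) a₂ := by
    rw [← stdH_conj, ha₂]
  have hw₁w₁ : stdHermForm (p + 1) (q + 1) w₁ w₁ = 1 := by
    rw [hw₁def, stdH_add_left, stdH_add_right, stdH_add_right, stdH_smul_left,
      stdH_smul_right, stdH_smul_left, stdH_smul_right, hn₁, hu₁v, ← ha₁, hv]
    linear_combination hconj₁ + hc₁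
  have hw₂w₂ : stdHermForm (p + 1) (q + 1) w₂ w₂ = 1 := by
    rw [hw₂def, stdH_add_left, stdH_add_right, stdH_add_right, stdH_smul_left,
      stdH_smul_right, stdH_smul_left, stdH_smul_right, hn₂, hu₂v, ← ha₂, hv]
    linear_combination hconj₂ + hc₂
  obtain ⟨g, hiso, hgv, hgw⟩ := exists_isometry_fix_map v w₁ w₂ hvw₁ hvw₂ hw₁w₁ hw₂w₂
  have hu₁eq : a₁ • (w₁ - v) = u₁ := by
    rw [hw₁def, add_sub_cancel_right, smul_smul, mul_inv_cancel₀ ht₁, one_smul]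
  refine ⟨g, hiso, hgv, a₁ * a₂⁻¹, mul_ne_zero ht₁ (inv_ne_zero ht₂), ?_⟩
  calc g u₁ = g (a₁ • (w₁ - v)) := by rw [hu₁eq]
    _ = a₁ • (g w₁ - g v) := by rw [map_smul, map_sub]
    _ = a₁ • (a₂⁻¹ • u₂) := by rw [hgw, hgv, hw₂def, add_sub_cancel_right]
    _ = (a₁ * a₂⁻¹) • u₂ := by rw [smul_smul]
end
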